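/- Let K be an infinite field, let n ≥ 1, d ≥ 1, and fix a d^{n}-cage over K. Then the set of homogeneous polynomials P ∈ K[x_0,…,x_n] of degree d (together with the zero polynomial) satisfying P(p_I) = 0 for all I ∈ {1,…,d}^n is exactly the K-linear span of 𝓛_1,…,𝓛_n; moreover 𝓛_1,…,𝓛_n are linearly independent over K, so this space of polynomials has dimension n. -/

import Mathlib

open MvPolynomial Finset

namespace CageAux

variable {K : Type*} [Field K]

/-- A degree-1 monomial exponent is `single k 1`. -/
lemma degree_one_exponent {m : ℕ} (s : Fin m →₀ ℕ) (hs : Finsupp.degree s = 1) :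
    ∃ k, s = Finsupp.single k 1 := by
  classical
  have hsupp : s.support.Nonempty := by
    by_contra h
    rw [Finset.not_nonempty_iff_eq_empty] at h
    have hs2 : ∑ i ∈ s.support, s i = 1 := hs
    simp [h] at hs2
  obtain ⟨k, hk⟩ := hsupp
  refine ⟨k, ?_⟩
  have hk1 : 1 ≤ s k := Nat.one_le_iff_ne_zero.2 (Finsupp.mem_support_iff.1 hk)
  have hs' : ∑ i ∈ s.support, s i = 1 := hs
  have hsum : s k + ∑ i ∈ s.support.erase k, s i = 1 := by
    rw [← Finset.add_sum_erase _ _ hk] at hs'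
    exact hs'
  have hrest : ∀ i ∈ s.support.erase k, s i = 0 := by
    intro i hi
    have : ∑ i ∈ s.support.erase k, s i = 0 := by omega
    exact Finset.sum_eq_zero_iff.1 this i hi
  ext l
  by_cases hl : l = k
  · subst hl
    have : s l = 1 := by omega
    simp [this]
  · have : s l = 0 := by
      by_cases hmem : l ∈ s.support
      · exact hrest l (Finset.mem_erase.2 ⟨hl, hmem⟩)
      · exact Finsupp.notMem_support_iff.1 hmem
    simp [this, Finsupp.single_eq_of_ne' (Ne.symm hl)]

/-- Structure of a homogeneous degree-1 polynomial. -/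
lemma linear_eq_sum {m : ℕ} {L : MvPolynomial (Fin m) K} (hL : L.IsHomogeneous 1) :
    L = ∑ k, C (L.coeff (Finsupp.single k 1)) * X k := by
  classical
  apply MvPolynomial.ext
  intro t
  rw [coeff_sum]
  simp only [coeff_C_mul, coeff_X']
  by_cases ht : Finsupp.degree t = 1
  · obtain ⟨k0, rfl⟩ := degree_one_exponent t ht
    rw [Finset.sum_eq_single k0]
    · simp
    · intro k _ hk
      have : ¬ (Finsupp.single k 1 = Finsupp.single k0 1) := by
        intro h
        exact hk (Finsupp.single_left_injective one_ne_zero h)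
      simp [this]
    · simp
  · have h0 : L.coeff t = 0 := hL.coeff_eq_zero ht
    rw [h0]
    rw [Finset.sum_eq_zero]
    intro k _
    have : ¬ (Finsupp.single k 1 = t) := by
      rintro rfl
      exact ht (by
        show ∑ i ∈ (Finsupp.single k 1).support, _ = 1
        rw [Finsupp.support_single_ne_zero k one_ne_zero]
        simp)
    simp [this]

/-- Evaluation of a linear form. -/
lemma eval_linear {m : ℕ} {L : MvPolynomial (Fin m) K} (hL : L.IsHomogeneous 1)
    (v : Fin m → K) :
    eval v L = ∑ k, L.coeff (Finsupp.single k 1) * v k := by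
  conv_lhs => rw [linear_eq_sum hL]
  simp


lemma exists_coeff_ne_zero {m : ℕ} {L : MvPolynomial (Fin m) K} (hL : L.IsHomogeneous 1)
    (h0 : L ≠ 0) : ∃ k, L.coeff (Finsupp.single k 1) ≠ 0 := by
  by_contra h
  push_neg at h
  apply h0
  rw [linear_eq_sum hL]
  rw [Finset.sum_eq_zero]
  intro k _
  rw [h k]
  simp

lemma eval_aeval' {σ τ : Type*} (w : τ → K) (g : σ → MvPolynomial τ K)
    (Q : MvPolynomial σ K) :
    eval w (aeval g Q) = eval (fun s => eval w (g s)) Q := by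
  rw [aeval_def, eval_eval₂]
  have h : (eval w).comp (algebraMap K (MvPolynomial τ K)) = RingHom.id K := by
    ext r
    simp
  rw [h, eval₂_id]

lemma eval_smul_homog {m : ℕ} {P : MvPolynomial (Fin m) K} {e : ℕ} (hP : P.IsHomogeneous e)
    (c : K) (v : Fin m → K) : eval (c • v) P = c ^ e * eval v P := by
  conv_lhs => rw [P.as_sum]
  conv_rhs => rw [P.as_sum]
  rw [map_sum, map_sum, Finset.mul_sum]
  apply Finset.sum_congr rfl
  intro s hs
  rw [eval_monomial, eval_monomial]
  have hw := hP (Finsupp.mem_support_iff.1 hs)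
  have hdeg : ∑ k ∈ s.support, s k = e := by
    have hd : Finsupp.degree s = (Finsupp.weight 1) s := by
      rw [Finsupp.degree_eq_weight_one]; rfl
    have : Finsupp.degree s = e := by rw [hd]; exact_mod_cast hw
    exact this
  have hprod : (s.prod fun n e' => (c • v) n ^ e') = c ^ e * s.prod fun n e' => v n ^ e' := by
    rw [Finsupp.prod, Finsupp.prod]
    simp only [Pi.smul_apply, smul_eq_mul, mul_pow]
    rw [Finset.prod_mul_distrib, Finset.prod_pow_eq_pow_sum, hdeg]
  rw [hprod]
  ring

lemma eq_C_of_isHomogeneous_zero {m : ℕ} {Q : MvPolynomial (Fin m) K}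
    (h : Q.IsHomogeneous 0) : Q = C (Q.coeff 0) := by
  have h1 : Q ∈ homogeneousSubmodule (Fin m) K 0 := (mem_homogeneousSubmodule _ _).2 h
  have h2 : homogeneousComponent 0 Q = if 0 = 0 then Q else 0 := homogeneousComponent_of_mem h1
  rw [if_pos rfl] at h2
  conv_lhs => rw [← h2]
  rw [homogeneousComponent_zero]

lemma X_dvd_sub_aeval {σ : Type*} [DecidableEq σ] (k : σ) (Q : MvPolynomial σ K) :
    X k ∣ Q - aeval (Function.update X k 0) Q := by
  induction Q using MvPolynomial.induction_on with
  | C c => simp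
  | add P R hP hR =>
      have h : P + R - aeval (Function.update X k 0) (P + R)
          = (P - aeval (Function.update X k 0) P) + (R - aeval (Function.update X k 0) R) := by
        rw [map_add]; ring
      rw [h]; exact dvd_add hP hR
  | mul_X P l hP =>
      rw [map_mul, aeval_X]
      by_cases hl : l = k
      · rw [hl, Function.update_self]
        rw [mul_zero, sub_zero]
        exact dvd_mul_left _ _
      · rw [Function.update_of_ne hl]
        have h : P * X l - aeval (Function.update X k 0) P * X l
            = (P - aeval (Function.update X k 0) P) * X l := by ring
        rw [h]
        exact hP.mul_right _

lemma X_dvd_of_eval [Infinite K] {σ : Type*} [DecidableEq σ] (k : σ)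
    {Q : MvPolynomial σ K} (h : ∀ w : σ → K, w k = 0 → eval w Q = 0) : X k ∣ Q := by
  have h0 : aeval (Function.update (X : σ → MvPolynomial σ K) k 0) Q = 0 := by
    apply MvPolynomial.funext
    intro w
    have hz : eval w (0 : MvPolynomial σ K) = 0 := map_zero _
    rw [hz, eval_aeval']
    exact h _ (by simp)
  have h1 := X_dvd_sub_aeval (K := K) k Q
  rwa [h0, sub_zero] at h1

lemma linear_dvd [Infinite K] {m : ℕ} {Lf P : MvPolynomial (Fin (m+1)) K}
    (hL : Lf.IsHomogeneous 1) (hL0 : Lf ≠ 0)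
    (h : ∀ w, eval w Lf = 0 → eval w P = 0) : Lf ∣ P := by
  classical
  obtain ⟨k0, hk0⟩ := exists_coeff_ne_zero hL hL0
  set a : Fin (m+1) → K := fun k => Lf.coeff (Finsupp.single k 1) with ha
  set ρf : Fin (m+1) → MvPolynomial (Fin (m+1)) K :=
    Function.update X k0 (C (a k0)⁻¹ *
      (X k0 - ∑ l, C (a (k0.succAbove l)) * X (k0.succAbove l))) with hρf
  have hLsplit : Lf = C (a k0) * X k0 + ∑ l, C (a (k0.succAbove l)) * X (k0.succAbove l) := by
    conv_lhs => rw [linear_eq_sum hL]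
    rw [Fin.sum_univ_succAbove (fun k => C (a k) * X k) k0]
  have hinv : ∀ Q, aeval (Function.update X k0 Lf) (aeval ρf Q) = Q := by
    intro Q
    rw [← AlgHom.comp_apply, comp_aeval]
    have hfun : (fun i => aeval (Function.update X k0 Lf) (ρf i)) = X := by
      funext i
      by_cases hi : i = k0
      · rw [hi, hρf, Function.update_self]
        rw [map_mul, map_sub, aeval_C, aeval_X, Function.update_self]
        rw [map_sum]
        have hterm : ∀ l, aeval (Function.update X k0 Lf)
            (C (a (k0.succAbove l)) * X (k0.succAbove l))
            = C (a (k0.succAbove l)) * X (k0.succAbove l) := by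
          intro l
          rw [map_mul, aeval_C, aeval_X, Function.update_of_ne (Fin.succAbove_ne k0 l)]
          rfl
        rw [Finset.sum_congr rfl (fun l _ => hterm l)]
        rw [hLsplit]
        rw [add_sub_cancel_right]
        rw [MvPolynomial.algebraMap_eq, ← mul_assoc, ← C_mul, inv_mul_cancel₀ hk0, C_1, one_mul]
      · rw [hρf, Function.update_of_ne hi, aeval_X, Function.update_of_ne hi]
    rw [hfun, aeval_X_left_apply]
  have hdvd : X k0 ∣ aeval ρf P := by
    apply X_dvd_of_eval k0
    intro w hwk
    rw [eval_aeval']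
    apply h
    have hw' : ∀ l, eval w (ρf (k0.succAbove l)) = w (k0.succAbove l) := by
      intro l
      rw [hρf, Function.update_of_ne (Fin.succAbove_ne k0 l), eval_X]
    have hwk0 : eval w (ρf k0)
        = -((a k0)⁻¹ * ∑ l, a (k0.succAbove l) * w (k0.succAbove l)) := by
      rw [hρf, Function.update_self]
      rw [map_mul, map_sub, eval_C, eval_X, hwk, map_sum]
      have hterm : ∀ l, eval w (C (a (k0.succAbove l)) * X (k0.succAbove l))
          = a (k0.succAbove l) * w (k0.succAbove l) := by
        intro l
        rw [map_mul, eval_C, eval_X]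
      rw [Finset.sum_congr rfl (fun l _ => hterm l)]
      ring
    rw [eval_linear hL]
    rw [Fin.sum_univ_succAbove (fun k => a k * eval w (ρf k)) k0]
    rw [hwk0]
    have hsum2 : ∑ l, a (k0.succAbove l) * eval w (ρf (k0.succAbove l))
        = ∑ l, a (k0.succAbove l) * w (k0.succAbove l) :=
      Finset.sum_congr rfl (fun l _ => by rw [hw' l])
    rw [hsum2]
    rw [mul_neg, ← mul_assoc, mul_inv_cancel₀ hk0, one_mul, neg_add_cancel]
  obtain ⟨Q, hQ⟩ := hdvd
  refine ⟨aeval (Function.update X k0 Lf) Q, ?_⟩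
  have h2 := congrArg (aeval (Function.update X k0 Lf)) hQ
  rw [hinv P, map_mul, aeval_X, Function.update_self] at h2
  exact h2

lemma homog_factor {m : ℕ} {Lf Q : MvPolynomial (Fin m) K} {e : ℕ}
    (hL : Lf.IsHomogeneous 1) (hL0 : Lf ≠ 0) (hP : (Lf * Q).IsHomogeneous (e+1)) :
    Q.IsHomogeneous e := by
  classical
  have hcomp : ∀ i, i ≠ e → homogeneousComponent i Q = 0 := by
    intro i hie
    by_cases hiD : i ≤ Q.totalDegree
    · have hmem : Lf * Q ∈ homogeneousSubmodule (Fin m) K (e+1) :=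
        (mem_homogeneousSubmodule _ _).2 hP
      have hz : homogeneousComponent (i+1) (Lf * Q) = 0 := by
        rw [homogeneousComponent_of_mem hmem, if_neg (by omega)]
      have hexp : homogeneousComponent (i+1) (Lf * Q)
          = Lf * homogeneousComponent i Q := by
        conv_lhs => rw [← sum_homogeneousComponent Q, Finset.mul_sum, map_sum]
        rw [Finset.sum_eq_single i]
        · have hm : Lf * homogeneousComponent i Q ∈ homogeneousSubmodule (Fin m) K (i+1) := by
            apply (mem_homogeneousSubmodule _ _).2
            have h' := hL.mul (homogeneousComponent_isHomogeneous i Q)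
            rwa [add_comm] at h'
          rw [homogeneousComponent_of_mem hm, if_pos rfl]
        · intro j _ hj
          have hm : Lf * homogeneousComponent j Q ∈ homogeneousSubmodule (Fin m) K (j+1) := by
            apply (mem_homogeneousSubmodule _ _).2
            have h' := hL.mul (homogeneousComponent_isHomogeneous j Q)
            rwa [add_comm] at h'
          rw [homogeneousComponent_of_mem hm, if_neg (by omega)]
        · intro hnot
          exact absurd (Finset.mem_range.2 (by omega)) hnot
      rw [hexp] at hz
      rcases mul_eq_zero.1 hz with h | h
      · exact absurd h hL0
      · exact h
    · exact homogeneousComponent_eq_zero _ _ (by omega)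
  have hQ : Q = homogeneousComponent e Q := by
    conv_lhs => rw [← sum_homogeneousComponent Q]
    rw [Finset.sum_eq_single e (fun j _ hj => hcomp j hj)]
    intro he
    rw [Finset.mem_range, not_lt] at he
    exact homogeneousComponent_eq_zero _ _ (by omega)
  rw [hQ]
  exact homogeneousComponent_isHomogeneous e Q

lemma eval_zero_of_mem_span {σ : Type*} {s : Set (MvPolynomial σ K)} {w : σ → K}
    (hs : ∀ x ∈ s, eval w x = 0) {T : MvPolynomial σ K}
    (hT : T ∈ Submodule.span K s) : eval w T = 0 := by
  induction hT using Submodule.span_induction with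
  | mem x hx => exact hs x hx
  | zero => simp
  | add x y _ _ hx hy => rw [map_add, hx, hy, add_zero]
  | smul c x _ hx => rw [smul_eq_C_mul, map_mul, hx, mul_zero]

lemma prod_linear_homog {m : ℕ} (dj : ℕ) (f : ℕ → MvPolynomial (Fin m) K)
    (hf : ∀ i < dj, (f i).IsHomogeneous 1) :
    (∏ i ∈ Finset.range dj, f i).IsHomogeneous dj := by
  have h := IsHomogeneous.prod (Finset.range dj) f (fun _ => 1)
    (fun i hi => hf i (Finset.mem_range.1 hi))
  simpa using h


lemma mul_mem_span {σ : Type*} {s t : Set (MvPolynomial σ K)} {y : MvPolynomial σ K}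
    (h : ∀ x ∈ s, y * x ∈ Submodule.span K t) {z : MvPolynomial σ K}
    (hz : z ∈ Submodule.span K s) : y * z ∈ Submodule.span K t := by
  induction hz using Submodule.span_induction with
  | mem x hx => exact h x hx
  | zero => rw [mul_zero]; exact Submodule.zero_mem _
  | add a b _ _ ha hb => rw [mul_add]; exact Submodule.add_mem _ ha hb
  | smul c a _ ha => rw [mul_smul_comm]; exact Submodule.smul_mem _ _ ha

lemma cage_e_zero {m : ℕ} (d : Fin (m+1) → ℕ) (hd : ∀ j, 1 ≤ d j)
    (p : (Fin (m+1) → ℕ) → (Fin (m+2) → K))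
    (P : MvPolynomial (Fin (m+2)) K) (hP : P.IsHomogeneous 0)
    (hvan : ∀ I, (∀ j, I j < d j) → eval (p I) P = 0) :
    P = 0 := by
  have h0 : P = C (P.coeff 0) := eq_C_of_isHomogeneous_zero hP
  have hI : ∀ j : Fin (m+1), (fun _ : Fin (m+1) => 0) j < d j := fun j => hd j
  have hv := hvan (fun _ => 0) hI
  rw [h0] at hv ⊢
  rw [eval_C] at hv
  rw [hv, C_0]

lemma cage_main [Infinite K] :
    ∀ (N m e : ℕ), m + e ≤ N →
    ∀ (d : Fin (m+1) → ℕ), (∀ j, 1 ≤ d j) → (∀ j, e ≤ d j) →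
    ∀ (L : Fin (m+1) → ℕ → MvPolynomial (Fin (m+2)) K),
      (∀ j i, i < d j → (L j i).IsHomogeneous 1) →
    ∀ (p : (Fin (m+1) → ℕ) → (Fin (m+2) → K)),
      (∀ I, (∀ j, I j < d j) → p I ≠ 0) →
      (∀ I : Fin (m+1) → ℕ, (∀ j, I j < d j) → LinearIndependent K fun j => L j (I j)) →
      (∀ I : Fin (m+1) → ℕ, (∀ j, I j < d j) →
        ∀ v : Fin (m+2) → K, (∀ j, eval v (L j (I j)) = 0) ↔ ∃ c : K, v = c • p I) →
      (∀ j i I, i < d j → (∀ j', I j' < d j') → i ≠ I j → eval (p I) (L j i) ≠ 0) →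
    ∀ P : MvPolynomial (Fin (m+2)) K, P.IsHomogeneous e →
      (∀ I, (∀ j, I j < d j) → eval (p I) P = 0) →
    P ∈ Submodule.span K {x | ∃ j, d j = e ∧ x = ∏ i ∈ Finset.range (d j), L j i} := by
  intro N
  induction N with
  | zero =>
    intro m e hme d hd he L hL p hp0 hind hline hne P hP hvan
    have he0 : e = 0 := by omega
    subst he0
    rw [cage_e_zero d hd p P hP hvan]
    exact Submodule.zero_mem _
  | succ N IH =>
    intro m e hme d hd he L hL p hp0 hind hline hne P hP hvan
    rcases e with _ | e'
    · rw [cage_e_zero d hd p P hP hvan]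
      exact Submodule.zero_mem _
    classical
    set i0 : ℕ := d 0 - 1 with hi0def
    have hi0 : i0 < d 0 := by have := hd 0; omega
    set Lstar := L 0 i0 with hLstardef
    have hLstar1 : Lstar.IsHomogeneous 1 := hL 0 i0 hi0
    have hIval : ∀ j : Fin (m+1), (fun j => d j - 1) j < d j := fun j => by
      have := hd j; simp only; omega
    have hLstar0 : Lstar ≠ 0 := by
      have h := (hind (fun j => d j - 1) hIval).ne_zero 0
      exact h
    obtain ⟨k0, hk0⟩ := exists_coeff_ne_zero hLstar1 hLstar0
    set a : Fin (m+2) → K := fun k => Lstar.coeff (Finsupp.single k 1) with ha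
    set F : MvPolynomial (Fin (m+1)) K :=
      C (-(a k0)⁻¹) * ∑ l, C (a (k0.succAbove l)) * X l with hF
    set g : Fin (m+2) → MvPolynomial (Fin (m+1)) K :=
      fun k => (finSuccEquiv' k0 k).elim F X with hg
    have hgk0 : g k0 = F := by
      rw [hg]; simp only [finSuccEquiv'_at, Option.elim]
    have hgs : ∀ l, g (k0.succAbove l) = X l := by
      intro l; rw [hg]; simp only [finSuccEquiv'_succAbove, Option.elim]
    set ι : (Fin (m+1) → K) → (Fin (m+2) → K) := fun v k => eval v (g k) with hιdef
    have hι1 : ∀ (v : Fin (m+1) → K) (Q : MvPolynomial (Fin (m+2)) K),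
        eval (ι v) Q = eval v (aeval g Q) := fun v Q => (eval_aeval' v g Q).symm
    have hιs : ∀ v l, ι v (k0.succAbove l) = v l := by
      intro v l
      rw [hιdef]; simp only; rw [hgs, eval_X]
    have hιk0 : ∀ v, ι v k0 = eval v F := by
      intro v; rw [hιdef]; simp only; rw [hgk0]
    have hevalF : ∀ v : Fin (m+1) → K,
        eval v F = -(a k0)⁻¹ * ∑ l, a (k0.succAbove l) * v l := by
      intro v
      rw [hF, map_mul, eval_C, map_sum]
      congr 1
      refine Finset.sum_congr rfl fun l _ => ?_
      rw [map_mul, eval_C, eval_X]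
    have hevalLstar : ∀ w, eval w Lstar
        = a k0 * w k0 + ∑ l, a (k0.succAbove l) * w (k0.succAbove l) := by
      intro w
      rw [eval_linear hLstar1]
      exact Fin.sum_univ_succAbove (fun k => a k * w k) k0
    have hιLstar : ∀ v, eval (ι v) Lstar = 0 := by
      intro v
      rw [hevalLstar]
      have h2 : ∑ l, a (k0.succAbove l) * ι v (k0.succAbove l)
          = ∑ l, a (k0.succAbove l) * v l :=
        Finset.sum_congr rfl fun l _ => by rw [hιs]
      rw [h2, hιk0, hevalF]
      have hcancel : a k0 * (-(a k0)⁻¹) = -1 := by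
        have hak : a k0 ≠ 0 := hk0
        rw [mul_neg, mul_inv_cancel₀ hak]
      rw [← mul_assoc, hcancel, neg_one_mul, neg_add_cancel]
    have hsurj : ∀ w, eval w Lstar = 0 → ι (fun l => w (k0.succAbove l)) = w := by
      intro w hw
      funext k
      by_cases hk : k = k0
      · subst hk
        rw [hιk0, hevalF]
        rw [hevalLstar] at hw
        have hS : ∑ l, a (k.succAbove l) * w (k.succAbove l) = -(a k * w k) := by
          linear_combination hw
        rw [hS]
        have hak : a k ≠ 0 := hk0
        rw [neg_mul_neg, ← mul_assoc, inv_mul_cancel₀ hak, one_mul]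
      · obtain ⟨l, rfl⟩ := Fin.exists_succAbove_eq hk
        rw [hιs]
    have hF1 : F.IsHomogeneous 1 := by
      rw [hF]
      exact IsHomogeneous.C_mul
        (IsHomogeneous.sum _ _ _ (fun l _ => isHomogeneous_C_mul_X _ _)) _
    have hg1 : ∀ k, (g k).IsHomogeneous 1 := by
      intro k
      by_cases hk : k = k0
      · rw [hk, hgk0]; exact hF1
      · obtain ⟨l, rfl⟩ := Fin.exists_succAbove_eq hk
        rw [hgs]; exact isHomogeneous_X _ _
    have hφhom : ∀ (Q : MvPolynomial (Fin (m+2)) K) (e'' : ℕ),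
        Q.IsHomogeneous e'' → (aeval g Q).IsHomogeneous e'' := by
      intro Q e'' hQ
      have h := hQ.aeval g hg1
      simpa using h
    have hιsmul : ∀ (c : K) v, ι (c • v) = c • ι v := by
      intro c v
      funext k
      rw [hιdef]
      simp only [Pi.smul_apply, smul_eq_mul]
      rw [eval_smul_homog (hg1 k), pow_one]
    have hι0 : ι 0 = 0 := by
      have h := hιsmul 0 0
      rwa [zero_smul, zero_smul] at h
    have hzero : ∀ I : Fin (m+1) → ℕ, (∀ j, I j < d j) → ∀ j, eval (p I) (L j (I j)) = 0 := by
      intro I hI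
      exact (hline I hI (p I)).mpr ⟨1, (one_smul _ _).symm⟩
    set tgt : Set (MvPolynomial (Fin (m+2)) K) :=
      {x | ∃ j, d j = e' + 1 ∧ x = ∏ i ∈ Finset.range (d j), L j i} with htgt
    have htgt_van : ∀ x ∈ tgt, ∀ I : Fin (m+1) → ℕ, (∀ j, I j < d j) → eval (p I) x = 0 := by
      rintro x ⟨j, hdj, rfl⟩ I hI
      rw [map_prod]
      apply Finset.prod_eq_zero (Finset.mem_range.2 (hI j))
      exact hzero I hI j
    obtain ⟨T, hTspan, hTvan, hRH⟩ :
        ∃ T, T ∈ Submodule.span K tgt ∧ (∀ I : Fin (m+1) → ℕ, (∀ j, I j < d j) → eval (p I) T = 0) ∧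
          (∀ w, eval w Lstar = 0 → eval w (P - T) = 0) := by
      rcases Nat.eq_zero_or_pos m with hm | hm
      · subst hm
        refine ⟨0, Submodule.zero_mem _, fun I hI => by rw [map_zero], ?_⟩
        intro w hw
        rw [sub_zero]
        have hIstar : ∀ j : Fin 1, (fun _ : Fin 1 => i0) j < d j := by
          intro j
          rw [Fin.fin_one_eq_zero j]
          exact hi0
        have hall : ∀ j : Fin 1, eval w (L j ((fun _ : Fin 1 => i0) j)) = 0 := by
          intro j
          rw [Fin.fin_one_eq_zero j]
          exact hw
        obtain ⟨c, rfl⟩ := (hline _ hIstar w).mp hall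
        rw [eval_smul_homog hP, hvan _ hIstar, mul_zero]
      · obtain ⟨m'', rfl⟩ := Nat.exists_eq_succ_of_ne_zero (Nat.pos_iff_ne_zero.mp hm)
        set d' : Fin (m''+1) → ℕ := fun j => d j.succ with hd'
        set L' : Fin (m''+1) → ℕ → MvPolynomial (Fin (m''+2)) K :=
          fun j i => aeval g (L j.succ i) with hL'
        set ext : (Fin (m''+1) → ℕ) → (Fin (m''+2) → ℕ) := fun I => Fin.cases i0 I with hext
        set p' : (Fin (m''+1) → ℕ) → (Fin (m''+2) → K) :=
          fun I => fun l => p (ext I) (k0.succAbove l) with hp'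
        have hext0 : ∀ I, ext I 0 = i0 := by intro I; rw [hext]; simp
        have hexts : ∀ (I : Fin (m''+1) → ℕ) (j : Fin (m''+1)), ext I j.succ = I j := by
          intro I j; rw [hext]; simp
        have hextval : ∀ I : Fin (m''+1) → ℕ, (∀ j, I j < d' j) → (∀ j, ext I j < d j) := by
          intro I hI j
          rcases Fin.eq_zero_or_eq_succ j with rfl | ⟨j', rfl⟩
          · rw [hext0]; exact hi0
          · rw [hexts]; exact hI j'
        have hextline : ∀ I : Fin (m''+1) → ℕ, (∀ j, I j < d' j) → ∀ j, eval (p (ext I)) (L j (ext I j)) = 0 :=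
          fun I hI => hzero (ext I) (hextval I hI)
        have hfix : ∀ I : Fin (m''+1) → ℕ, (∀ j, I j < d' j) → ι (p' I) = p (ext I) := by
          intro I hI
          apply hsurj
          have h0 := hextline I hI 0
          rw [hext0] at h0
          exact h0
        have hp'0 : ∀ I : Fin (m''+1) → ℕ, (∀ j, I j < d' j) → p' I ≠ 0 := by
          intro I hI h0
          apply hp0 (ext I) (hextval I hI)
          rw [← hfix I hI, h0, hι0]
        have hL'1 : ∀ j i, i < d' j → (L' j i).IsHomogeneous 1 := by
          intro j i hi
          rw [hL']
          exact hφhom _ _ (hL j.succ i hi)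
        have hevalL' : ∀ (v : Fin (m''+2) → K) j i,
            eval v (L' j i) = eval (ι v) (L j.succ i) := by
          intro v j i
          rw [hL', hι1]
        have hne' : ∀ (j : Fin (m''+1)) (i : ℕ) (I : Fin (m''+1) → ℕ), i < d' j → (∀ j', I j' < d' j') → i ≠ I j →
            eval (p' I) (L' j i) ≠ 0 := by
          intro j i I hi hI hne2
          rw [hevalL', hfix I hI]
          apply hne j.succ i (ext I) hi (hextval I hI)
          rw [hexts]
          exact hne2
        have hind' : ∀ I : Fin (m''+1) → ℕ, (∀ j, I j < d' j) → LinearIndependent K fun j => L' j (I j) := by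
          intro I hI
          have h1 : LinearIndependent K fun j : Fin (m''+2) => L j (ext I j) :=
            hind (ext I) (hextval I hI)
          have h2 : LinearIndependent K fun j : Fin (m''+1) => L j.succ (I j) := by
            have h3 := h1.comp Fin.succ (Fin.succ_injective _)
            have h4 : ((fun j : Fin (m''+2) => L j (ext I j)) ∘ Fin.succ)
                = fun j : Fin (m''+1) => L j.succ (I j) := by
              funext j
              simp only [Function.comp]
              rw [hexts]
            rwa [h4] at h3
          have hdisj : Disjoint
              (Submodule.span K (Set.range fun j : Fin (m''+1) => L j.succ (I j)))
              (LinearMap.ker (aeval (R := K) g).toLinearMap) := by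
            rw [Submodule.disjoint_def]
            intro x hxspan hxker
            have hφx : aeval g x = 0 := hxker
            rw [Submodule.mem_span_range_iff_exists_fun] at hxspan
            obtain ⟨c, hc⟩ := hxspan
            have hxhom : x.IsHomogeneous 1 := by
              rw [← hc]
              apply IsHomogeneous.sum
              intro j _
              rw [smul_eq_C_mul]
              exact (hL j.succ (I j) (hI j)).C_mul _
            by_contra hx0
            have hxvan : ∀ w, eval w Lstar = 0 → eval w x = 0 := by
              intro w hw
              rw [← hsurj w hw, hι1, hφx, map_zero]
            obtain ⟨Q2, hQ2⟩ := linear_dvd hLstar1 hLstar0 hxvan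
            have hxQ2 : (Lstar * Q2).IsHomogeneous (0 + 1) := by
              rw [← hQ2]; exact hxhom
            have hQ2hom : Q2.IsHomogeneous 0 := homog_factor hLstar1 hLstar0 hxQ2
            obtain ⟨c0, hc0⟩ : ∃ c0, Q2 = C c0 := ⟨Q2.coeff 0, eq_C_of_isHomogeneous_zero hQ2hom⟩
            rw [hc0] at hQ2
            set b : Fin (m''+2) → K := Fin.cases (-c0) c with hb
            have hb0 : b 0 = -c0 := by simp [hb]
            have hbs : ∀ j : Fin (m''+1), b j.succ = c j := by
              intro j; simp [hb]
            have hsum : ∑ j, b j • L j (ext I j) = 0 := by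
              rw [Fin.sum_univ_succ]
              have hx' : ∑ j : Fin (m''+1), b j.succ • L j.succ (ext I j.succ) = x := by
                rw [← hc]
                refine Finset.sum_congr rfl fun j _ => ?_
                rw [hbs, hexts]
              rw [hx', hb0, hext0]
              rw [hQ2, neg_smul, smul_eq_C_mul]
              ring
            have hall0 := Fintype.linearIndependent_iff.1 h1 b hsum
            apply hx0
            rw [← hc]
            apply Finset.sum_eq_zero
            intro j _
            have hcj : c j = 0 := by rw [← hbs j]; exact hall0 j.succ
            rw [hcj, zero_smul]
          have h5 := h2.map (f := (aeval (R := K) g).toLinearMap) hdisj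
          have h6 : ((aeval (R := K) g).toLinearMap ∘ fun j : Fin (m''+1) => L j.succ (I j))
              = fun j => L' j (I j) := by
            funext j
            rfl
          rwa [h6] at h5
        have hline' : ∀ I : Fin (m''+1) → ℕ, (∀ j, I j < d' j) → ∀ v : Fin (m''+2) → K,
            (∀ j, eval v (L' j (I j)) = 0) ↔ ∃ c : K, v = c • p' I := by
          intro I hI v
          constructor
          · intro hv
            have hall : ∀ j : Fin (m''+2), eval (ι v) (L j (ext I j)) = 0 := by
              intro j
              rcases Fin.eq_zero_or_eq_succ j with rfl | ⟨j', rfl⟩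
              · rw [hext0]
                exact hιLstar v
              · rw [hexts, ← hevalL' v j' (I j')]
                exact hv j'
            obtain ⟨c, hc⟩ := (hline (ext I) (hextval I hI) (ι v)).mp hall
            refine ⟨c, ?_⟩
            funext l
            have h1 : ι v (k0.succAbove l) = v l := hιs v l
            rw [← h1, hc]
            rw [hp']
            simp
          · rintro ⟨c, rfl⟩ j
            rw [hevalL']
            have h2 : ι (c • p' I) = c • p (ext I) := by
              rw [hιsmul, hfix I hI]
            rw [h2, eval_smul_homog (hL j.succ (I j) (hI j)), pow_one]
            have h3 := hextline I hI j.succ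
            rw [hexts] at h3
            rw [h3, mul_zero]
        have hvan' : ∀ I : Fin (m''+1) → ℕ, (∀ j, I j < d' j) → eval (p' I) (aeval g P) = 0 := by
          intro I hI
          rw [← hι1, hfix I hI]
          exact hvan (ext I) (hextval I hI)
        have hIH := IH m'' (e' + 1) (by omega) d' (fun j => hd j.succ) (fun j => he j.succ)
          L' hL'1 p' hp'0 hind' hline' hne' (aeval g P) (hφhom P _ hP) hvan'
        set S0 : Set (MvPolynomial (Fin (m''+3)) K) :=
          {x | ∃ j : Fin (m''+1), d j.succ = e' + 1 ∧
            x = ∏ i ∈ Finset.range (d j.succ), L j.succ i} with hS0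
        have himg : {x | ∃ j, d' j = e' + 1 ∧ x = ∏ i ∈ Finset.range (d' j), L' j i}
            = (aeval (R := K) g).toLinearMap '' S0 := by
          ext x
          constructor
          · rintro ⟨j, hj, rfl⟩
            refine ⟨∏ i ∈ Finset.range (d' j), L j.succ i, ⟨j, ?_, ?_⟩, ?_⟩
            · exact hj
            · rfl
            · simp only [AlgHom.toLinearMap_apply]
              rw [map_prod]
          · rintro ⟨y, ⟨j, hj, rfl⟩, rfl⟩
            refine ⟨j, ?_, ?_⟩
            · exact hj
            · simp only [AlgHom.toLinearMap_apply]
              rw [map_prod]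
        rw [himg, Submodule.span_image] at hIH
        obtain ⟨T, hT0, hφT⟩ := Submodule.mem_map.1 hIH
        have hS0tgt : S0 ⊆ tgt := by
          rintro x ⟨j, hj, rfl⟩
          exact ⟨j.succ, hj, rfl⟩
        refine ⟨T, Submodule.span_mono hS0tgt hT0, ?_, ?_⟩
        · intro I hI
          exact eval_zero_of_mem_span
            (fun x hx => htgt_van x (hS0tgt hx) I hI) hT0
        · intro w hw
          have h1 : aeval g (P - T) = 0 := by
            rw [map_sub]
            have hφT' : aeval g T = aeval g P := hφT
            rw [hφT', sub_self]
          rw [← hsurj w hw, hι1, h1, map_zero]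
    by_cases hPT : P - T = 0
    · have hPT' : P = T := by rwa [sub_eq_zero] at hPT
      rw [hPT']
      exact hTspan
    obtain ⟨Q, hQ⟩ := linear_dvd hLstar1 hLstar0 hRH
    have hThom : T.IsHomogeneous (e' + 1) := by
      have hsub : Submodule.span K tgt ≤ homogeneousSubmodule (Fin (m+2)) K (e'+1) := by
        rw [Submodule.span_le]
        rintro x ⟨j, hj, rfl⟩
        apply (mem_homogeneousSubmodule _ _).2
        rw [← hj]
        exact prod_linear_homog (d j) _ (fun i hi => hL j i hi)
      exact (mem_homogeneousSubmodule _ _).1 (hsub hTspan)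
    have hPMT : (Lstar * Q).IsHomogeneous (e' + 1) := by
      rw [← hQ]; exact hP.sub hThom
    have hQhom : Q.IsHomogeneous e' := homog_factor hLstar1 hLstar0 hPMT
    set dm : Fin (m+1) → ℕ := fun j => if j = 0 then d 0 - 1 else d j with hdm
    have hdm0 : dm 0 = d 0 - 1 := by rw [hdm]; simp
    have hdmne : ∀ j : Fin (m+1), j ≠ 0 → dm j = d j := by
      intro j hj; rw [hdm]; simp [hj]
    have hdmle : ∀ j, dm j ≤ d j := by
      intro j
      by_cases hj : j = 0
      · rw [hj, hdm0]; omega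
      · rw [hdmne j hj]
    have hdmval : ∀ I : Fin (m+1) → ℕ, (∀ j, I j < dm j) → (∀ j, I j < d j) :=
      fun I hI j => lt_of_lt_of_le (hI j) (hdmle j)
    have hQvan : ∀ I : Fin (m+1) → ℕ, (∀ j, I j < dm j) → eval (p I) Q = 0 := by
      intro I hI
      have hIv : ∀ j, I j < d j := hdmval I hI
      have hI0 : I 0 < d 0 - 1 := by
        have h := hI 0
        rw [hdm0] at h
        exact h
      have h1 : eval (p I) (P - T) = 0 := by
        rw [map_sub, hvan I hIv, hTvan I hIv, sub_zero]
      rw [hQ, map_mul] at h1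
      have h2 : eval (p I) Lstar ≠ 0 := hne 0 i0 I hi0 hIv (by omega)
      rcases mul_eq_zero.1 h1 with h | h
      · exact absurd h h2
      · exact h
    have hPeq : P = T + Lstar * Q := by
      rw [← hQ]; ring
    by_cases hd0 : d 0 = 1
    · have he0 : e' = 0 := by have := he 0; omega
      subst he0
      have hQC : Q = C (Q.coeff 0) := eq_C_of_isHomogeneous_zero hQhom
      rw [hPeq, hQC]
      apply Submodule.add_mem _ hTspan
      have hLmem : Lstar * C (Q.coeff 0) = (Q.coeff 0) • Lstar := by
        rw [smul_eq_C_mul, mul_comm]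
      rw [hLmem]
      apply Submodule.smul_mem
      apply Submodule.subset_span
      refine ⟨0, by omega, ?_⟩
      rw [hd0, Finset.prod_range_one, hLstardef]
      have : i0 = 0 := by omega
      rw [this]
    · have hd02 : 2 ≤ d 0 := by have := hd 0; omega
      have hIH2 := IH m e' (by omega) dm
        (fun j => by
          by_cases hj : j = 0
          · rw [hj, hdm0]; omega
          · rw [hdmne j hj]; exact hd j)
        (fun j => by
          by_cases hj : j = 0
          · rw [hj, hdm0]
            have := he 0; omega
          · rw [hdmne j hj]
            have := he j; omega)
        L (fun j i hi => hL j i (lt_of_lt_of_le hi (hdmle j)))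
        p (fun I hI => hp0 I (hdmval I hI)) (fun I hI => hind I (hdmval I hI))
        (fun I hI => hline I (hdmval I hI))
        (fun j i I hi hI hne2 => hne j i I (lt_of_lt_of_le hi (hdmle j)) (hdmval I hI) hne2)
        Q hQhom hQvan
      have hmul : Lstar * Q ∈ Submodule.span K tgt := by
        refine mul_mem_span ?_ hIH2
        rintro x ⟨j, hj, rfl⟩
        by_cases hj0 : j = 0
        · subst hj0
          have hj' : d 0 - 1 = e' := by
            rw [hdm0] at hj
            exact hj
          have hd0e : d 0 = e' + 1 := by omega
          apply Submodule.subset_span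
          refine ⟨0, hd0e, ?_⟩
          rw [hdm0]
          conv_rhs => rw [show d 0 = (d 0 - 1) + 1 from by omega, Finset.prod_range_succ]
          rw [mul_comm, hLstardef, hi0def]
        · exfalso
          have hj' : d j = e' := by
            rw [hdmne j hj0] at hj
            exact hj
          have := he j
          omega
      rw [hPeq]
      exact Submodule.add_mem _ hTspan hmul

lemma eval_linear_add_smul {m : ℕ} {L : MvPolynomial (Fin m) K} (hL : L.IsHomogeneous 1)
    (x y : Fin m → K) (t : K) :
    eval (x + t • y) L = eval x L + t * eval y L := by
  rw [eval_linear hL, eval_linear hL, eval_linear hL]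
  rw [Finset.mul_sum, ← Finset.sum_add_distrib]
  refine Finset.sum_congr rfl fun k _ => ?_
  simp only [Pi.add_apply, Pi.smul_apply, smul_eq_mul]
  ring

end CageAux

open CageAux in
theorem space_of_degree_d_polys_through_all_nodes
    {K : Type*} [Field K] [Infinite K] (n d : ℕ) (hn : 1 ≤ n) (hd : 1 ≤ d)
    (L : Fin n → Fin d → MvPolynomial (Fin (n + 1)) K)
    (hL : ∀ j i, (L j i).IsHomogeneous 1)
    (p : (Fin n → Fin d) → Fin (n + 1) → K)
    (hp0 : ∀ I, p I ≠ 0)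
    (hind : ∀ I : Fin n → Fin d, LinearIndependent K fun j => L j (I j))
    (hline : ∀ (I : Fin n → Fin d) (v : Fin (n + 1) → K),
      (∀ j, MvPolynomial.eval v (L j (I j)) = 0) ↔ ∃ c : K, v = c • p I)
    (hne : ∀ (j : Fin n) (i : Fin d) (I : Fin n → Fin d),
      i ≠ I j → MvPolynomial.eval (p I) (L j i) ≠ 0) :
    {P : MvPolynomial (Fin (n + 1)) K | P.IsHomogeneous d ∧
        ∀ I : Fin n → Fin d, MvPolynomial.eval (p I) P = 0}
      = ↑(Submodule.span K (Set.range fun j : Fin n => ∏ i, L j i)) ∧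
    LinearIndependent K (fun j : Fin n => ∏ i, L j i) ∧
    Module.finrank K
      ↥(Submodule.span K (Set.range fun j : Fin n => ∏ i, L j i)) = n := by
  classical
  obtain ⟨m, rfl⟩ : ∃ m, n = m + 1 := ⟨n - 1, by omega⟩
  have hzero : ∀ (I : Fin (m+1) → Fin d) (j : Fin (m+1)),
      MvPolynomial.eval (p I) (L j (I j)) = 0 :=
    fun I => (hline I (p I)).mpr ⟨1, (one_smul _ _).symm⟩
  have hLprod_hom : ∀ j : Fin (m+1),
      (∏ i, L j i).IsHomogeneous d := by
    intro j
    have h := MvPolynomial.IsHomogeneous.prod Finset.univ (L j) (fun _ => 1) (fun i _ => hL j i)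
    simpa using h
  have hLprod_van : ∀ (j : Fin (m+1)) (I : Fin (m+1) → Fin d),
      MvPolynomial.eval (p I) (∏ i, L j i) = 0 := by
    intro j I
    rw [map_prod]
    apply Finset.prod_eq_zero (Finset.mem_univ (I j))
    exact hzero I j
  -- the hard inclusion via cage_main
  have hsubset : {P : MvPolynomial (Fin (m+1+1)) K | P.IsHomogeneous d ∧
        ∀ I : Fin (m+1) → Fin d, MvPolynomial.eval (p I) P = 0}
      ⊆ ↑(Submodule.span K (Set.range fun j : Fin (m+1) => ∏ i, L j i)) := by
    rintro P ⟨hPhom, hPvan⟩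
    set Lt : Fin (m+1) → ℕ → MvPolynomial (Fin (m+2)) K :=
      fun j i => if h : i < d then L j ⟨i, h⟩ else 0 with hLt
    set toF : ℕ → Fin d := fun i => if h : i < d then ⟨i, h⟩ else ⟨0, hd⟩ with htoF
    set pt : (Fin (m+1) → ℕ) → (Fin (m+2) → K) := fun I => p (fun j => toF (I j)) with hpt
    have hLt_eq : ∀ (j : Fin (m+1)) (i : ℕ) (h : i < d), Lt j i = L j ⟨i, h⟩ := by
      intro j i h; rw [hLt]; simp [h]
    have htoF_eq : ∀ (i : ℕ) (h : i < d), toF i = ⟨i, h⟩ := by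
      intro i h; rw [htoF]; simp [h]
    have hmem := cage_main (m + d) m d le_rfl (fun _ => d) (fun _ => hd) (fun _ => le_rfl)
      Lt
      (by
        intro j i hi
        rw [hLt_eq j i hi]
        exact hL j ⟨i, hi⟩)
      pt
      (fun I _ => hp0 _)
      (by
        intro I hI
        have h := hind (fun j => toF (I j))
        have heq : (fun j => Lt j (I j)) = fun j => L j (toF (I j)) := by
          funext j
          rw [hLt_eq j (I j) (hI j), htoF_eq (I j) (hI j)]
        rw [heq]
        exact h)
      (by
        intro I hI v
        have heq2 : ∀ j, Lt j (I j) = L j (toF (I j)) := fun j => by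
          rw [hLt_eq _ _ (hI j), htoF_eq _ (hI j)]
        refine Iff.trans ?_ (hline (fun j => toF (I j)) v)
        constructor
        · intro hv j; rw [← heq2 j]; exact hv j
        · intro hv j; rw [heq2 j]; exact hv j)
      (by
        intro j i I hi hI hij
        rw [hLt_eq _ _ hi]
        apply hne j ⟨i, hi⟩ (fun j => toF (I j))
        rw [htoF_eq _ (hI j)]
        intro hcon
        apply hij
        simpa using hcon)
      P hPhom
      (fun I _ => hPvan _)
    have hprod : ∀ j : Fin (m+1), ∏ i ∈ Finset.range d, Lt j i = ∏ i, L j i := by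
      intro j
      have h := Fin.prod_univ_eq_prod_range (fun i => Lt j i) d
      rw [← h]
      apply Finset.prod_congr rfl
      intro i _
      rw [hLt_eq j i.val i.isLt, Fin.eta]
    have hset : {x : MvPolynomial (Fin (m+2)) K |
          ∃ j, (fun _ : Fin (m+1) => d) j = d ∧ x = ∏ i ∈ Finset.range ((fun _ : Fin (m+1) => d) j), Lt j i}
        = Set.range fun j : Fin (m+1) => ∏ i, L j i := by
      ext x
      simp only [Set.mem_setOf_eq, Set.mem_range]
      constructor
      · rintro ⟨j, -, rfl⟩
        exact ⟨j, (hprod j).symm⟩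
      · rintro ⟨j, rfl⟩
        exact ⟨j, trivial, (hprod j).symm⟩
    rw [hset] at hmem
    exact hmem
  have hsupset : ↑(Submodule.span K (Set.range fun j : Fin (m+1) => ∏ i, L j i))
      ⊆ {P : MvPolynomial (Fin (m+1+1)) K | P.IsHomogeneous d ∧
        ∀ I : Fin (m+1) → Fin d, MvPolynomial.eval (p I) P = 0} := by
    intro P hP
    constructor
    · have hle : Submodule.span K (Set.range fun j : Fin (m+1) => ∏ i, L j i)
          ≤ MvPolynomial.homogeneousSubmodule (Fin (m+2)) K d := by
        rw [Submodule.span_le]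
        rintro x ⟨j, rfl⟩
        exact (MvPolynomial.mem_homogeneousSubmodule _ _).2 (hLprod_hom j)
      exact (MvPolynomial.mem_homogeneousSubmodule _ _).1 (hle hP)
    · intro I
      apply eval_zero_of_mem_span (s := Set.range fun j : Fin (m+1) => ∏ i, L j i) ?_ hP
      rintro x ⟨j, rfl⟩
      exact hLprod_van j I
  have hli : LinearIndependent K (fun j : Fin (m+1) => ∏ i, L j i) := by
    by_cases hd1 : d = 1
    · subst hd1
      have h := hind (fun _ => 0)
      have heq : (fun j : Fin (m+1) => ∏ i, L j i) = fun j => L j 0 := by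
        funext j
        exact Fin.prod_univ_one _
      rw [heq]
      exact h
    · have hd2 : 2 ≤ d := by omega
      rw [Fintype.linearIndependent_iff]
      intro c hc j0
      set I : Fin (m+1) → Fin d := fun _ => ⟨0, hd⟩ with hI
      set I' : Fin (m+1) → Fin d := Function.update I j0 ⟨1, by omega⟩ with hI'
      have hII' : I' j0 = ⟨1, by omega⟩ := by rw [hI']; exact Function.update_self _ _ _
      have hII'' : ∀ j, j ≠ j0 → I' j = I j := by
        intro j hj; rw [hI']; exact Function.update_of_ne hj _ _
      obtain ⟨t, ht⟩ := Infinite.exists_notMem_finset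
        (insert (0:K) (Finset.univ.image fun i : Fin d =>
          -(MvPolynomial.eval (p I) (L j0 i)) * (MvPolynomial.eval (p I') (L j0 i))⁻¹))
      set v : Fin (m+2) → K := p I + t • p I' with hv
      have hfac : ∀ i : Fin d, MvPolynomial.eval v (L j0 i)
          = MvPolynomial.eval (p I) (L j0 i) + t * MvPolynomial.eval (p I') (L j0 i) :=
        fun i => eval_linear_add_smul (hL j0 i) _ _ t
      have hne0 : ∀ i : Fin d, MvPolynomial.eval v (L j0 i) ≠ 0 := by
        intro i
        rw [hfac i]
        by_cases hi : i = I j0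
        · have hα0 : MvPolynomial.eval (p I) (L j0 i) = 0 := by
            rw [hi]; exact hzero I j0
          have hβ0 : MvPolynomial.eval (p I') (L j0 i) ≠ 0 := by
            apply hne j0 i I'
            rw [hi, hII', hI]
            intro hcon
            have := congrArg Fin.val hcon
            simp at this
          have ht0 : t ≠ 0 := fun h0 => ht (h0 ▸ Finset.mem_insert_self _ _)
          rw [hα0, zero_add]
          exact mul_ne_zero ht0 hβ0
        · have hα0 : MvPolynomial.eval (p I) (L j0 i) ≠ 0 := hne j0 i I hi
          by_cases hβ0 : MvPolynomial.eval (p I') (L j0 i) = 0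
          · rw [hβ0, mul_zero, add_zero]; exact hα0
          · intro hcon
            apply ht
            apply Finset.mem_insert_of_mem
            refine Finset.mem_image.2 ⟨i, Finset.mem_univ i, ?_⟩
            field_simp
            linear_combination -hcon
      have hoth : ∀ j, j ≠ j0 → MvPolynomial.eval v (∏ i, L j i) = 0 := by
        intro j hj
        rw [map_prod]
        apply Finset.prod_eq_zero (Finset.mem_univ (I j))
        rw [hv, eval_linear_add_smul (hL j (I j))]
        have h1 : MvPolynomial.eval (p I) (L j (I j)) = 0 := hzero I j
        have h2 : MvPolynomial.eval (p I') (L j (I j)) = 0 := by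
          rw [← hII'' j hj]
          exact hzero I' j
        rw [h1, h2, mul_zero, add_zero]
      have hc' := congrArg (MvPolynomial.eval v) hc
      rw [map_sum, map_zero] at hc'
      have hterm : ∀ j : Fin (m+1), MvPolynomial.eval v ((c j) • ∏ i, L j i)
          = c j * MvPolynomial.eval v (∏ i, L j i) := by
        intro j; rw [MvPolynomial.smul_eq_C_mul, map_mul, MvPolynomial.eval_C]
      rw [Finset.sum_congr rfl (fun j _ => hterm j)] at hc'
      rw [Finset.sum_eq_single j0 (fun j _ hj => by rw [hoth j hj, mul_zero])
        (fun h => absurd (Finset.mem_univ j0) h)] at hc'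
      have hprodne : MvPolynomial.eval v (∏ i, L j0 i) ≠ 0 := by
        rw [map_prod]
        apply Finset.prod_ne_zero_iff.2
        intro i _
        exact hne0 i
      rcases mul_eq_zero.1 hc' with h | h
      · exact h
      · exact absurd h hprodne
  refine ⟨Set.Subset.antisymm hsubset hsupset, hli, ?_⟩
  rw [finrank_span_eq_card hli]
  exact Fintype.card_fin _
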